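/- Let R be a commutative ring and (M,λ,∂) a formed space with boundary over R. Then g_X(M,λ,∂) ≤ 1 + g_H(M,λ) + g_H(ker ∂, λ restricted to ker ∂). In particular, if g_X(M,λ,∂) ≥ 2n then g_H(M,λ) ≥ n. -/
import Mathlib


/-- The hyperbolic genus of a module with a bilinear form: the largest `g` for which there is a
hyperbolic family `e₁, f₁, …, e_g, f_g`. -/
noncomputable def gH (R : Type) [CommRing R] (M : Type) (lam : M → M → R) : ℕ :=
  sSup {g : ℕ | ∃ e f : Fin g → M,
    (∀ i j, lam (e i) (f j) = if i = j then 1 else 0) ∧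
    (∀ i j, lam (e i) (e j) = 0) ∧ (∀ i j, lam (f i) (f j) = 0)}

/-- The arc genus of a formed space with boundary: the largest `g` for which there exist
`a₁, …, a_g` with `∂(aᵢ) = 1` for all `i` and `λ(aᵢ, aⱼ) = 1` for `i < j`. -/
noncomputable def gX (R : Type) [CommRing R] (M : Type) (lam : M → M → R) (bd : M → R) : ℕ :=
  sSup {g : ℕ | ∃ a : Fin g → M, (∀ i, bd (a i) = 1) ∧
    ∀ i j : Fin g, i < j → lam (a i) (a j) = 1}


open Finset Module in
private lemma nat_sSup_le' {S : Set ℕ} {c : ℕ} (h : ∀ g ∈ S, g ≤ c) : sSup S ≤ c := by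
  rcases S.eq_empty_or_nonempty with hS | hS
  · rw [hS, csSup_empty]; exact bot_le
  · exact csSup_le hS h

private lemma nat_exists_ge_of_le_sSup' {S : Set ℕ} {k : ℕ} (hk : 0 < k) (h : k ≤ sSup S) :
    ∃ g ∈ S, k ≤ g := by
  by_contra hc
  push_neg at hc
  have : sSup S ≤ k - 1 := nat_sSup_le' (fun g hg => by have := hc g hg; omega)
  omega

section AuxHyp

open Finset Module

variable {R M : Type} [CommRing R] [AddCommGroup M] [Module R M]

private lemma skew_of_alt' (lam : M →ₗ[R] M →ₗ[R] R) (halt : ∀ v : M, lam v v = 0)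
    (x y : M) : lam y x = - lam x y := by
  have h := halt (x + y)
  simp only [map_add, LinearMap.add_apply, halt x, halt y] at h
  linear_combination h

private lemma hyp_card_le' [Nontrivial R] [Module.Finite R M] [Module.Free R M]
    (lam : M →ₗ[R] M →ₗ[R] R) (halt : ∀ v : M, lam v v = 0) {n : ℕ} (e f : Fin n → M)
    (hef : ∀ i j, lam (e i) (f j) = if i = j then 1 else 0)
    (hee : ∀ i j, lam (e i) (e j) = 0)
    (hff : ∀ i j, lam (f i) (f j) = 0) : 2 * n ≤ finrank R M := by
  have hfe : ∀ i j, lam (f i) (e j) = if j = i then -1 else 0 := by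
    intro i j
    rw [skew_of_alt' lam halt, hef]
    split_ifs <;> simp
  have hli : LinearIndependent R (Sum.elim e f) := by
    rw [Fintype.linearIndependent_iff]
    intro c hc s
    have key : ∀ x : M, lam (∑ s, c s • Sum.elim e f s) x
        = ∑ s, c s * lam (Sum.elim e f s) x := by
      intro x
      simp [map_sum, LinearMap.sum_apply, map_smul, LinearMap.smul_apply, smul_eq_mul]
    cases s with
    | inl j =>
      have h1 : (∑ s, c s * lam (Sum.elim e f s) (f j)) = 0 := by
        rw [← key, hc]; simp
      rw [Fintype.sum_sum_type] at h1
      simpa [hef, hff, mul_ite, Finset.sum_ite_eq'] using h1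
    | inr j =>
      have h1 : (∑ s, c s * lam (Sum.elim e f s) (e j)) = 0 := by
        rw [← key, hc]; simp
      rw [Fintype.sum_sum_type] at h1
      have h2 : -(c (Sum.inr j)) = 0 := by
        simpa [hee, hfe, mul_ite, Finset.sum_ite_eq'] using h1
      exact neg_eq_zero.mp h2
  have := hli.fintype_card_le_finrank
  simp only [Fintype.card_sum, Fintype.card_fin] at this
  omega

set_option maxHeartbeats 1600000 in
private lemma arc_constructions (lam : M →ₗ[R] M →ₗ[R] R) (halt : ∀ v : M, lam v v = 0)
    (bd : M →ₗ[R] R) {g : ℕ} (a : Fin g → M) (ha1 : ∀ i, bd (a i) = 1)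
    (ha2 : ∀ i j : Fin g, i < j → lam (a i) (a j) = 1) :
    (∃ e f : Fin (g / 2) → M,
      (∀ i j, lam (e i) (f j) = if i = j then 1 else 0) ∧
      (∀ i j, lam (e i) (e j) = 0) ∧ (∀ i j, lam (f i) (f j) = 0)) ∧
    (∃ e f : Fin ((g - 1) / 2) → ↥(LinearMap.ker bd),
      (∀ i j, lam (e i : M) (f j : M) = if i = j then 1 else 0) ∧
      (∀ i j, lam (e i : M) (e j : M) = 0) ∧ (∀ i j, lam (f i : M) (f j : M) = 0)) := by
  classical
  set A : ℕ → M := fun n => if h : n < g then a ⟨n, h⟩ else 0 with hAdef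
  have hval : ∀ i j : ℕ, i < g → j < g →
      lam (A i) (A j) = if i < j then 1 else if j < i then -1 else 0 := by
    intro i j hi hj
    have hAi : A i = a ⟨i, hi⟩ := by simp [hAdef, hi]
    have hAj : A j = a ⟨j, hj⟩ := by simp [hAdef, hj]
    rw [hAi, hAj]
    rcases lt_trichotomy i j with h | h | h
    · rw [if_pos h]; exact ha2 _ _ (by exact h)
    · subst h; simp [halt]
    · rw [if_neg (by omega), if_pos h, skew_of_alt' lam halt,
        ha2 ⟨j, hj⟩ ⟨i, hi⟩ (by exact h)]
  have hbd : ∀ i, i < g → bd (A i) = 1 := by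
    intro i hi
    simp only [hAdef, dif_pos hi]
    exact ha1 _
  constructor
  · -- construction in M
    set E : ℕ → M := fun k => A (2 * k) - A (2 * k + 1) with hEdef
    set F : ℕ → M := fun k => A (2 * k + 1) + ∑ l ∈ Finset.range k, E l with hFdef
    have lEA : ∀ k j : ℕ, 2 * k + 1 < g → 2 * j + 1 < g →
        lam (E k) (A (2 * j + 1)) = if k = j then 1 else 0 := by
      intro k j hk hj
      simp only [hEdef, map_sub, LinearMap.sub_apply]
      rw [hval _ _ (by omega) hj, hval _ _ hk hj]
      split_ifs <;> first | (exfalso; omega) | ring1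
    have lEE : ∀ k l : ℕ, 2 * k + 1 < g → 2 * l + 1 < g → lam (E k) (E l) = 0 := by
      intro k l hk hl
      simp only [hEdef, map_sub, LinearMap.sub_apply, map_sub]
      rw [hval _ _ (by omega) (by omega), hval _ _ (by omega) hl,
        hval _ _ hk (by omega), hval _ _ hk hl]
      split_ifs <;> first | (exfalso; omega) | ring1
    have lEF : ∀ k j : ℕ, 2 * k + 1 < g → 2 * j + 1 < g →
        lam (E k) (F j) = if k = j then 1 else 0 := by
      intro k j hk hj
      have hsum : lam (E k) (∑ l ∈ Finset.range j, E l) = 0 := by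
        rw [map_sum]
        exact Finset.sum_eq_zero fun l hl =>
          lEE k l hk (by have := Finset.mem_range.mp hl; omega)
      rw [hFdef]
      simp only [map_add]
      rw [hsum, lEA k j hk hj, add_zero]
    have lAE : ∀ i k : ℕ, 2 * i + 1 < g → 2 * k + 1 < g →
        lam (A (2 * i + 1)) (E k) = if k = i then -1 else 0 := by
      intro i k hi hk
      rw [skew_of_alt' lam halt, lEA k i hk hi]
      split_ifs <;> ring1
    have lFF : ∀ i j : ℕ, 2 * i + 1 < g → 2 * j + 1 < g → lam (F i) (F j) = 0 := by
      intro i j hi hj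
      have hS1 : lam (∑ k ∈ Finset.range i, E k) (A (2 * j + 1)) = if j < i then 1 else 0 := by
        rw [map_sum, LinearMap.sum_apply,
          Finset.sum_congr rfl (fun k hk => lEA k j
            (by have := Finset.mem_range.mp hk; omega) hj),
          Finset.sum_ite_eq' (Finset.range i) j (fun _ => (1 : R))]
        simp [Finset.mem_range]
      have hS2 : lam (A (2 * i + 1)) (∑ k ∈ Finset.range j, E k)
          = if i < j then -1 else 0 := by
        rw [map_sum,
          Finset.sum_congr rfl (fun k hk => lAE i k hi
            (by have := Finset.mem_range.mp hk; omega)),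
          Finset.sum_ite_eq' (Finset.range j) i (fun _ => (-1 : R))]
        simp [Finset.mem_range]
      have hSS : lam (∑ k ∈ Finset.range i, E k) (∑ l ∈ Finset.range j, E l) = 0 := by
        rw [map_sum]
        refine Finset.sum_eq_zero fun l hl => ?_
        rw [map_sum, LinearMap.sum_apply]
        refine Finset.sum_eq_zero fun k hk => ?_
        exact lEE k l (by have := Finset.mem_range.mp hk; omega)
          (by have := Finset.mem_range.mp hl; omega)
      rw [hFdef]
      simp only [map_add, LinearMap.add_apply]
      rw [hS1, hS2, hSS, hval _ _ hi hj]
      split_ifs <;> first | (exfalso; omega) | ring1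
    refine ⟨fun i => E i.1, fun i => F i.1, fun i j => ?_, fun i j => ?_, fun i j => ?_⟩
    · rw [lEF i.1 j.1 (by omega) (by omega)]
      simp [Fin.ext_iff]
    · exact lEE i.1 j.1 (by omega) (by omega)
    · exact lFF i.1 j.1 (by omega) (by omega)
  · -- construction in ker bd
    set B : ℕ → M := fun k => A (k + 1) - A k with hBdef
    have hbdB : ∀ k, k + 1 < g → bd (B k) = 0 := by
      intro k h
      have h' : k < g := by omega
      simp only [hBdef, map_sub, hbd _ h, hbd _ h']
      ring1
    have lBB : ∀ p q : ℕ, p + 1 < g → q + 1 < g →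
        lam (B p) (B q) = if q = p + 1 then 1 else if p = q + 1 then -1 else 0 := by
      intro p q hp hq
      simp only [hBdef, map_sub, LinearMap.sub_apply]
      rw [hval _ _ hp hq, hval _ _ hp (by omega), hval _ _ (by omega) hq,
        hval _ _ (by omega) (by omega)]
      split_ifs <;> first | (exfalso; omega) | ring1
    have hEmem : ∀ i : Fin ((g - 1) / 2),
        (∑ k ∈ Finset.range (i.1 + 1), B (2 * k)) ∈ LinearMap.ker bd := by
      intro i
      rw [LinearMap.mem_ker, map_sum]
      refine Finset.sum_eq_zero fun k hk => ?_
      exact hbdB _ (by have := Finset.mem_range.mp hk; have := i.2; omega)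
    have hFmem : ∀ i : Fin ((g - 1) / 2), B (2 * i.1 + 1) ∈ LinearMap.ker bd := by
      intro i
      exact hbdB _ (by have := i.2; omega)
    refine ⟨fun i => ⟨_, hEmem i⟩, fun i => ⟨_, hFmem i⟩,
      fun i j => ?_, fun i j => ?_, fun i j => ?_⟩
    · show lam (∑ k ∈ Finset.range (i.1 + 1), B (2 * k)) (B (2 * j.1 + 1)) = _
      rw [map_sum, LinearMap.sum_apply]
      have hterm : ∀ k ∈ Finset.range (i.1 + 1),
          lam (B (2 * k)) (B (2 * j.1 + 1)) =
            (if k = j.1 then (1 : R) else 0) + (if k = j.1 + 1 then (-1 : R) else 0) := by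
        intro k hk
        rw [lBB _ _ (by have := Finset.mem_range.mp hk; have := i.2; omega)
          (by have := j.2; omega)]
        split_ifs <;> first | (exfalso; omega) | ring1
      rw [Finset.sum_congr rfl hterm, Finset.sum_add_distrib,
        Finset.sum_ite_eq' (Finset.range (i.1 + 1)) j.1 (fun _ => (1 : R)),
        Finset.sum_ite_eq' (Finset.range (i.1 + 1)) (j.1 + 1) (fun _ => (-1 : R))]
      simp only [Finset.mem_range, Fin.ext_iff]
      split_ifs <;> first | (exfalso; omega) | ring1
    · show lam (∑ k ∈ Finset.range (i.1 + 1), B (2 * k))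
          (∑ l ∈ Finset.range (j.1 + 1), B (2 * l)) = 0
      rw [map_sum]
      refine Finset.sum_eq_zero fun l hl => ?_
      rw [map_sum, LinearMap.sum_apply]
      refine Finset.sum_eq_zero fun k hk => ?_
      rw [lBB _ _ (by have := Finset.mem_range.mp hk; have := i.2; omega)
        (by have := Finset.mem_range.mp hl; have := j.2; omega)]
      split_ifs <;> first | (exfalso; omega) | ring1
    · show lam (B (2 * i.1 + 1)) (B (2 * j.1 + 1)) = 0
      rw [lBB _ _ (by have := i.2; omega) (by have := j.2; omega)]
      split_ifs <;> first | (exfalso; omega) | ring1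



open Finset Module in
theorem gX_le_genus_formula
    (R : Type) [CommRing R]
    (M : Type) [AddCommGroup M] [Module R M] [Module.Finite R M] [Module.Free R M]
    (lam : M →ₗ[R] M →ₗ[R] R) (halt : ∀ v : M, lam v v = 0) (bd : M →ₗ[R] R) :
    gX R M (fun x y => lam x y) (fun x => bd x) ≤
      1 + gH R M (fun x y => lam x y)
        + gH R ↥(LinearMap.ker bd) (fun x y => lam (x : M) (y : M)) ∧
    ∀ n : ℕ, 2 * n ≤ gX R M (fun x y => lam x y) (fun x => bd x) →
      n ≤ gH R M (fun x y => lam x y) := by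
  classical
  rcases subsingleton_or_nontrivial R with hR | hR
  · -- trivial ring: gX = 0
    have hX : gX R M (fun x y => lam x y) (fun x => bd x) = 0 := by
      have huniv : {g : ℕ | ∃ a : Fin g → M, (∀ i, bd (a i) = 1) ∧
          ∀ i j : Fin g, i < j → lam (a i) (a j) = 1} = Set.univ := by
        ext g
        simp only [Set.mem_setOf_eq, Set.mem_univ, iff_true]
        exact ⟨fun _ => 0, fun i => Subsingleton.elim _ _, fun i j _ => Subsingleton.elim _ _⟩
      have hnb : ¬ BddAbove (Set.univ : Set ℕ) := by
        rintro ⟨c, hc⟩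
        exact absurd (hc (Set.mem_univ (c + 1))) (by omega)
      rw [gX, huniv, csSup_of_not_bddAbove hnb, csSup_empty]
      rfl
    constructor
    · rw [hX]; exact Nat.zero_le _
    · intro n hn
      rw [hX] at hn
      have : n = 0 := by omega
      rw [this]
      exact Nat.zero_le _
  · -- nontrivial ring
    have bddM : BddAbove {g : ℕ | ∃ e f : Fin g → M,
        (∀ i j, lam (e i) (f j) = if i = j then 1 else 0) ∧
        (∀ i j, lam (e i) (e j) = 0) ∧ (∀ i j, lam (f i) (f j) = 0)} := by
      refine ⟨finrank R M, fun n hn => ?_⟩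
      obtain ⟨e, f, h1, h2, h3⟩ := hn
      have := hyp_card_le' lam halt e f h1 h2 h3
      omega
    have bddK : BddAbove {g : ℕ | ∃ e f : Fin g → ↥(LinearMap.ker bd),
        (∀ i j, lam (e i : M) (f j : M) = if i = j then 1 else 0) ∧
        (∀ i j, lam (e i : M) (e j : M) = 0) ∧ (∀ i j, lam (f i : M) (f j : M) = 0)} := by
      refine ⟨finrank R M, fun n hn => ?_⟩
      obtain ⟨e, f, h1, h2, h3⟩ := hn
      have := hyp_card_le' lam halt (fun i => (e i : M)) (fun i => (f i : M)) h1 h2 h3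
      omega
    have key : ∀ g ∈ {g : ℕ | ∃ a : Fin g → M, (∀ i, bd (a i) = 1) ∧
        ∀ i j : Fin g, i < j → lam (a i) (a j) = 1},
        g / 2 ≤ gH R M (fun x y => lam x y) ∧
        (g - 1) / 2 ≤ gH R ↥(LinearMap.ker bd) (fun x y => lam (x : M) (y : M)) := by
      rintro g ⟨a, ha1, ha2⟩
      obtain ⟨hM, hK⟩ := arc_constructions lam halt bd a ha1 ha2
      constructor
      · exact le_csSup bddM hM
      · exact le_csSup bddK hK
    constructor
    · apply nat_sSup_le'
      intro g hg
      obtain ⟨h1, h2⟩ := key g hg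
      omega
    · intro n hn
      rcases Nat.eq_zero_or_pos n with h0 | hpos
      · rw [h0]; exact Nat.zero_le _
      · obtain ⟨g, hgS, hge⟩ := nat_exists_ge_of_le_sSup' (k := 2 * n) (by omega) hn
        obtain ⟨h1, _⟩ := key g hgS
        omega
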